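/- For p ∈ [0,1] and positive semidefinite matrices, the map (A,B) ↦ A^p ⊗ B^{1-p} is jointly concave: for positive definite A₁, A₂, B₁, B₂ and λ ∈ [0,1], ((1-λ)A₁ + λA₂)^p ⊗ ((1-λ)B₁ + λB₂)^{1-p} ≥ (1-λ)(A₁^p ⊗ B₁^{1-p}) + λ(A₂^p ⊗ B₂^{1-p}) in the Loewner order. -/

import Mathlib

open scoped ComplexOrder Kronecker

/-- Matrix power via the continuous functional calculus. -/
noncomputable def mpow {n : Type*} [Fintype n] [DecidableEq n]
    (A : Matrix n n ℂ) (p : ℝ) : Matrix n n ℂ :=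
  cfc (fun x : ℝ => x ^ p) A

/-- The Loewner order on matrices. -/
def LoewnerLE {n : Type*} [Fintype n] (A B : Matrix n n ℂ) : Prop :=
  (B - A).PosSemidef

/-- The matrix geometric mean `A # B = A^{1/2}(A^{-1/2} B A^{-1/2})^{1/2} A^{1/2}`. -/
noncomputable def geo {n : Type*} [Fintype n] [DecidableEq n]
    (A B : Matrix n n ℂ) : Matrix n n ℂ :=
  mpow A (1/2) * mpow (mpow A (-(1/2)) * B * mpow A (-(1/2))) (1/2) * mpow A (1/2)

/-- The generalized Kantorovich constant. -/
noncomputable def Kconst (h p : ℝ) : ℝ :=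
  ((h ^ p - h) / ((p - 1) * (h - 1))) *
    (((p - 1) / p) * ((h ^ p - 1) / (h ^ p - h))) ^ p

/-- The Specht ratio. -/
noncomputable def Specht (h : ℝ) : ℝ :=
  if h = 1 then 1 else (h - 1) * h ^ (1 / (h - 1)) / (Real.exp 1 * Real.log h)

namespace LiebAux
open Matrix

set_option linter.unusedSectionVars false

section basic

variable {n : Type*} [Fintype n] [DecidableEq n]

lemma smul_posSemidef {M : Matrix n n ℂ} (hM : M.PosSemidef) {c : ℝ} (hc : 0 ≤ c) :
    (c • M).PosSemidef := by
  refine .of_dotProduct_mulVec_nonneg ?_ ?_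
  · show (c • M)ᴴ = c • M
    ext i j
    simp [conjTranspose_apply, hM.1.apply, Complex.real_smul]
  · intro x
    rw [smul_mulVec, dotProduct_smul]
    have := hM.dotProduct_mulVec_nonneg x
    have hc' : (0:ℂ) ≤ (c : ℂ) := by exact_mod_cast Complex.zero_le_real.mpr hc
    calc (0:ℂ) = c • (0:ℂ) := by simp
    _ ≤ c • (star x ⬝ᵥ M *ᵥ x) := by
      simp only [smul_eq_mul, Complex.real_smul]
      exact mul_le_mul_of_nonneg_left this hc'

lemma smul_posDef {M : Matrix n n ℂ} (hM : M.PosDef) {c : ℝ} (hc : 0 < c) :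
    (c • M).PosDef := by
  refine .of_dotProduct_mulVec_pos ?_ ?_
  · show (c • M)ᴴ = c • M
    ext i j
    simp [conjTranspose_apply, hM.1.apply, Complex.real_smul]
  · intro x hx
    rw [smul_mulVec, dotProduct_smul]
    have := hM.dotProduct_mulVec_pos hx
    have hc' : (0:ℂ) < (c : ℂ) := by exact_mod_cast Complex.zero_lt_real.mpr hc
    calc (0:ℂ) = c • (0:ℂ) := by simp
    _ < c • (star x ⬝ᵥ M *ᵥ x) := by
      simp only [smul_eq_mul, Complex.real_smul]
      exact mul_lt_mul_of_pos_left this hc'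

lemma convex_posDef {A B : Matrix n n ℂ} (hA : A.PosDef) (hB : B.PosDef) {l : ℝ}
    (h0 : 0 ≤ l) (h1 : l ≤ 1) : ((1 - l) • A + l • B).PosDef := by
  rcases eq_or_lt_of_le h1 with rfl | hlt
  · simpa using hB
  · exact Matrix.PosDef.add_posSemidef (smul_posDef hA (by linarith)) (smul_posSemidef hB.posSemidef h0)

lemma posDef_of_isUnit_det {M : Matrix n n ℂ} (hM : M.PosSemidef) (h : IsUnit M.det) :
    M.PosDef := by
  refine .of_dotProduct_mulVec_pos hM.1 fun x hx => ?_
  refine lt_of_le_of_ne (hM.dotProduct_mulVec_nonneg x) fun h0 => hx ?_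
  have hMx : M *ᵥ x = 0 := (hM.dotProduct_mulVec_zero_iff x).mp h0.symm
  have hinj := Matrix.mulVec_injective_iff_isUnit.mpr ((Matrix.isUnit_iff_isUnit_det M).mpr h)
  exact hinj (by simpa using hMx)

open scoped MatrixOrder Matrix.Norms.L2Operator in
lemma posSemidef_iff_eq_transpose_mul_self {A : Matrix n n ℂ} :
    A.PosSemidef ↔ ∃ B : Matrix n n ℂ, A = Bᴴ * B := by
  refine ⟨fun hA => ?_, fun ⟨B, hB⟩ => hB ▸ posSemidef_conjTranspose_mul_self B⟩
  obtain ⟨B, rfl⟩ := CStarAlgebra.nonneg_iff_eq_star_mul_self.mp hA.nonneg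
  exact ⟨B, rfl⟩

lemma kronecker_conjTranspose {m' : Type*} (A : Matrix n n ℂ) (B : Matrix m' m' ℂ) :
    (A ⊗ₖ B)ᴴ = Aᴴ ⊗ₖ Bᴴ := by
  ext ⟨i, j⟩ ⟨k, l⟩
  simp [conjTranspose_apply, mul_comm]

lemma kronecker_posSemidef {m' : Type*} [Fintype m'] [DecidableEq m']
    {A : Matrix n n ℂ} {B : Matrix m' m' ℂ} (hA : A.PosSemidef) (hB : B.PosSemidef) :
    (A ⊗ₖ B).PosSemidef := by
  obtain ⟨P, rfl⟩ := posSemidef_iff_eq_transpose_mul_self.mp hA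
  obtain ⟨Q, rfl⟩ := posSemidef_iff_eq_transpose_mul_self.mp hB
  rw [mul_kronecker_mul, ← kronecker_conjTranspose]
  exact posSemidef_conjTranspose_mul_self _

lemma kronecker_posDef {m' : Type*} [Fintype m'] [DecidableEq m']
    {A : Matrix n n ℂ} {B : Matrix m' m' ℂ} (hA : A.PosDef) (hB : B.PosDef) :
    (A ⊗ₖ B).PosDef := by
  refine posDef_of_isUnit_det (kronecker_posSemidef hA.posSemidef hB.posSemidef) ?_
  rw [Matrix.det_kronecker]
  exact ((isUnit_iff_ne_zero.mpr hA.det_pos.ne').pow _).mul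
    ((isUnit_iff_ne_zero.mpr hB.det_pos.ne').pow _)

lemma psd_of_sq_le_sq {S T : Matrix n n ℂ} (hS : S.PosSemidef) (hT : T.PosSemidef)
    (h : (T * T - S * S).PosSemidef) : (T - S).PosSemidef := by
  have hH : (T - S).IsHermitian := hT.1.sub hS.1
  refine hH.posSemidef_iff_eigenvalues_nonneg.mpr fun i => ?_
  by_contra hneg
  push_neg at hneg
  change hH.eigenvalues i < 0 at hneg
  set t := hH.eigenvalues i with ht
  set v : n → ℂ := ⇑(hH.eigenvectorBasis i) with hv
  have hv0 : v ≠ 0 := by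
    have := (hH.eigenvectorBasis).toBasis.ne_zero i
    intro hc; apply this; ext j; simpa using congrFun hc j
  have heig : (T - S) *ᵥ v = (t : ℂ) • v := by
    simpa [hv, ht] using hH.mulVec_eigenvectorBasis i
  have key : star v ⬝ᵥ (T * T - S * S) *ᵥ v
      = (t : ℂ) * (star v ⬝ᵥ T *ᵥ v + star v ⬝ᵥ S *ᵥ v) := by
    have expand : T * T - S * S = T * (T - S) + (T - S) * S := by noncomm_ring
    rw [expand]
    rw [add_mulVec, dotProduct_add]
    have h1 : star v ⬝ᵥ (T * (T - S)) *ᵥ v = (t:ℂ) * (star v ⬝ᵥ T *ᵥ v) := by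
      rw [← mulVec_mulVec, heig, mulVec_smul, dotProduct_smul]
      simp [smul_eq_mul]
    have h2 : star v ⬝ᵥ ((T - S) * S) *ᵥ v = (t:ℂ) * (star v ⬝ᵥ S *ᵥ v) := by
      rw [← mulVec_mulVec, dotProduct_mulVec, ← hH.eq, ← star_mulVec, heig]
      simp only [star_smul, smul_dotProduct]
      simp [RCLike.star_def, Complex.conj_ofReal, smul_eq_mul]
    rw [h1, h2, mul_add]
  have hsum_nonneg : (0:ℂ) ≤ star v ⬝ᵥ T *ᵥ v + star v ⬝ᵥ S *ᵥ v :=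
    add_nonneg (hT.dotProduct_mulVec_nonneg v) (hS.dotProduct_mulVec_nonneg v)
  have hkey_nonneg : (0:ℂ) ≤ (t : ℂ) * (star v ⬝ᵥ T *ᵥ v + star v ⬝ᵥ S *ᵥ v) := key ▸ h.dotProduct_mulVec_nonneg v
  have hzero : star v ⬝ᵥ T *ᵥ v + star v ⬝ᵥ S *ᵥ v = 0 := by
    by_contra hne
    have hpos : (0:ℂ) < star v ⬝ᵥ T *ᵥ v + star v ⬝ᵥ S *ᵥ v :=
      lt_of_le_of_ne hsum_nonneg (Ne.symm hne)
    have : (0:ℂ) < -(t:ℂ) := by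
      rw [Complex.pos_iff]
      simp [hneg]
    have := mul_pos this hpos
    rw [neg_mul] at this
    linarith [Complex.le_def.mp hkey_nonneg, Complex.lt_def.mp this]
  have hTv : star v ⬝ᵥ T *ᵥ v = 0 := by
    have h1 := hT.dotProduct_mulVec_nonneg v
    have h2 := hS.dotProduct_mulVec_nonneg v
    have h3 : star v ⬝ᵥ T *ᵥ v ≤ 0 := by
      rw [add_eq_zero_iff_eq_neg.mp hzero]; simpa using h2
    exact le_antisymm h3 h1
  have hSv : star v ⬝ᵥ S *ᵥ v = 0 := by
    have := hzero; rw [hTv, zero_add] at this; exact this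
  have hTv0 : T *ᵥ v = 0 := (hT.dotProduct_mulVec_zero_iff v).mp hTv
  have hSv0 : S *ᵥ v = 0 := (hS.dotProduct_mulVec_zero_iff v).mp hSv
  have : (t:ℂ) • v = 0 := by rw [← heig, sub_mulVec, hTv0, hSv0, sub_zero]
  rcases smul_eq_zero.mp this with h' | h'
  · exact absurd (Complex.ofReal_eq_zero.mp h') (ne_of_lt hneg)
  · exact hv0 h'

lemma fromBlocks_diag_posSemidef {A D : Matrix n n ℂ}
    (hA : A.PosSemidef) (hD : D.PosSemidef) :
    (Matrix.fromBlocks A 0 0 D).PosSemidef := by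
  obtain ⟨P, rfl⟩ := posSemidef_iff_eq_transpose_mul_self.mp hA
  obtain ⟨Q, rfl⟩ := posSemidef_iff_eq_transpose_mul_self.mp hD
  have : Matrix.fromBlocks (Pᴴ * P) 0 0 (Qᴴ * Q)
      = (Matrix.fromBlocks P 0 0 Q)ᴴ * (Matrix.fromBlocks P 0 0 Q) := by
    rw [fromBlocks_conjTranspose, fromBlocks_multiply]
    simp
  rw [this]
  exact posSemidef_conjTranspose_mul_self _

lemma step {C D G G' E F : Matrix n n ℂ}
    (hC : C.PosDef) (hG : G.PosSemidef) (hG' : G'.PosSemidef)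
    (hE : E.IsHermitian) (hF : F.IsHermitian)
    (hEE : E * E = C⁻¹)
    (hGG : G * C⁻¹ * G = D)
    (hFE : F * E = 1) (hEF : E * F = 1)
    (hblock : (Matrix.fromBlocks C G' G' D).PosSemidef) :
    (G - G').PosSemidef := by
  haveI : Invertible C := C.invertibleOfIsUnitDet (isUnit_iff_ne_zero.mpr hC.det_pos.ne')
  have hschur : (D - G'ᴴ * C⁻¹ * G').PosSemidef := by
    refine (Matrix.PosDef.fromBlocks₁₁ G' D hC).mp ?_
    rw [hG'.1.eq]
    exact hblock
  rw [hG'.1.eq] at hschur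
  have hEE' : ∀ X : Matrix n n ℂ, E * (E * X) = C⁻¹ * X := fun X => by
    rw [← Matrix.mul_assoc, hEE]
  have hFE' : ∀ X : Matrix n n ℂ, F * (E * X) = X := fun X => by
    rw [← Matrix.mul_assoc, hFE, Matrix.one_mul]
  set Y := E * G' * E with hY
  set Gt := E * G * E with hGt
  have hYpsd : Y.PosSemidef := by
    have := hG'.mul_mul_conjTranspose_same E
    rwa [hE.eq] at this
  have hGtpsd : Gt.PosSemidef := by
    have := hG.mul_mul_conjTranspose_same E
    rwa [hE.eq] at this
  have hYY : Y * Y = E * (G' * C⁻¹ * G') * E := by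
    rw [hY]
    simp only [Matrix.mul_assoc, hEE']
  have hGtGt : Gt * Gt = E * D * E := by
    rw [hGt, ← hGG]
    simp only [Matrix.mul_assoc, hEE']
  have hdiff : (Gt * Gt - Y * Y).PosSemidef := by
    rw [hYY, hGtGt]
    have : E * D * E - E * (G' * C⁻¹ * G') * E = E * (D - G' * C⁻¹ * G') * Eᴴ := by
      rw [hE.eq, Matrix.mul_sub, Matrix.sub_mul]
    rw [this]
    exact hschur.mul_mul_conjTranspose_same E
  have hkey := psd_of_sq_le_sq hYpsd hGtpsd hdiff
  have hcj := hkey.mul_mul_conjTranspose_same F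
  rw [hF.eq] at hcj
  have hconj : F * (Gt - Y) * F = G - G' := by
    rw [Matrix.mul_sub, Matrix.sub_mul, hGt, hY]
    congr 1 <;>
    · simp only [Matrix.mul_assoc, hFE']
      rw [hEF, Matrix.mul_one]
  rwa [hconj] at hcj

lemma isClosed_posSemidef : IsClosed {M : Matrix n n ℂ | M.PosSemidef} := by
  have heq : {M : Matrix n n ℂ | M.PosSemidef} =
      {M : Matrix n n ℂ | Mᴴ = M} ∩ ⋂ x : n → ℂ, {M | 0 ≤ star x ⬝ᵥ M *ᵥ x} := by
    ext M
    simp only [Set.mem_setOf_eq, Set.mem_inter_iff, Set.mem_iInter]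
    exact posSemidef_iff_dotProduct_mulVec
  rw [heq]
  refine IsClosed.inter (isClosed_eq continuous_id.matrix_conjTranspose continuous_id) ?_
  refine isClosed_iInter fun x => ?_
  have hcont : Continuous fun M : Matrix n n ℂ => star x ⬝ᵥ M *ᵥ x :=
    Continuous.dotProduct continuous_const (continuous_id.matrix_mulVec continuous_const)
  exact isClosed_le continuous_const hcont

end basic

section mpow

variable {n : Type*} [Fintype n] [DecidableEq n] {A : Matrix n n ℂ}


lemma mpow_eq (hA : A.PosDef) (p : ℝ) :
    mpow A p = (hA.1.eigenvectorUnitary : Matrix n n ℂ) *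
      diagonal (Complex.ofReal ∘ (fun x => x ^ p) ∘ hA.1.eigenvalues) *
      (star hA.1.eigenvectorUnitary : Matrix n n ℂ) := by
  rw [mpow, hA.1.cfc_eq]
  rfl

lemma mpow_isHermitian (hA : A.PosDef) (p : ℝ) : (mpow A p).IsHermitian := by
  rw [mpow_eq hA p, Matrix.star_eq_conjTranspose]
  apply isHermitian_mul_mul_conjTranspose
  exact isHermitian_diagonal_of_self_adjoint _ (by
    funext i
    simp [Pi.star_apply, Function.comp_apply, RCLike.star_def, Complex.conj_ofReal])

lemma mpow_mul_mpow (hA : A.PosDef) (p q : ℝ) :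
    mpow A p * mpow A q = mpow A (p + q) := by
  set U : Matrix n n ℂ := (hA.1.eigenvectorUnitary : Matrix n n ℂ) with hUdef
  have hU : star U * U = 1 := Unitary.coe_star_mul_self _
  rw [mpow_eq hA p, mpow_eq hA q, mpow_eq hA (p+q), ← hUdef]
  have hDiag : diagonal (Complex.ofReal ∘ (fun x : ℝ => x ^ p) ∘ hA.1.eigenvalues) *
      diagonal (Complex.ofReal ∘ (fun x : ℝ => x ^ q) ∘ hA.1.eigenvalues) =
      diagonal (Complex.ofReal ∘ (fun x : ℝ => x ^ (p+q)) ∘ hA.1.eigenvalues) := by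
    rw [diagonal_mul_diagonal]
    apply congrArg diagonal
    funext i
    simp only [Pi.mul_apply, Function.comp_apply, ← Complex.ofReal_mul]
    rw [← Real.rpow_add (hA.eigenvalues_pos i)]
  rw [← hDiag]
  calc U * diagonal (Complex.ofReal ∘ (fun x : ℝ => x ^ p) ∘ hA.1.eigenvalues) * star U *
      (U * diagonal (Complex.ofReal ∘ (fun x : ℝ => x ^ q) ∘ hA.1.eigenvalues) * star U)
      = U * diagonal (Complex.ofReal ∘ (fun x : ℝ => x ^ p) ∘ hA.1.eigenvalues) * (star U * U) *
        diagonal (Complex.ofReal ∘ (fun x : ℝ => x ^ q) ∘ hA.1.eigenvalues) * star U := by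
        simp only [Matrix.mul_assoc]
  _ = _ := by rw [hU, Matrix.mul_one]; simp only [Matrix.mul_assoc]

lemma mpow_zero (hA : A.PosDef) : mpow A 0 = 1 := by
  rw [mpow_eq hA 0]
  have : (Complex.ofReal ∘ (fun x : ℝ => x ^ (0:ℝ)) ∘ hA.1.eigenvalues) = fun _ => 1 := by
    funext i; simp [Real.rpow_zero]
  rw [this]
  simp only [diagonal_one, Matrix.mul_one]
  exact Unitary.coe_mul_star_self _

lemma mpow_one (hA : A.PosDef) : mpow A 1 = A := by
  rw [mpow_eq hA 1]
  have : (Complex.ofReal ∘ (fun x : ℝ => x ^ (1:ℝ)) ∘ hA.1.eigenvalues)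
      = Complex.ofReal ∘ hA.1.eigenvalues := by
    funext i; simp [Real.rpow_one]
  rw [this]
  exact hA.1.spectral_theorem.symm

lemma mpow_posSemidef (hA : A.PosDef) (p : ℝ) : (mpow A p).PosSemidef := by
  rw [mpow_eq hA p, Matrix.star_eq_conjTranspose]
  refine (posSemidef_diagonal_iff.mpr fun i => ?_).mul_mul_conjTranspose_same _
  exact Complex.zero_le_real.mpr (Real.rpow_nonneg (hA.eigenvalues_pos i).le _)

lemma mpow_posDef (hA : A.PosDef) (p : ℝ) : (mpow A p).PosDef := by
  refine posDef_of_isUnit_det (mpow_posSemidef hA p) ?_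
  rw [mpow_eq hA p]
  set U : Matrix n n ℂ := (hA.1.eigenvectorUnitary : Matrix n n ℂ)
  have hUunit : IsUnit U.det := by
    have h1 : U * star U = 1 := Unitary.coe_mul_star_self _
    have := congrArg Matrix.det h1
    rw [Matrix.det_mul, Matrix.det_one] at this
    exact IsUnit.of_mul_eq_one _ this
  have hstarU : IsUnit (star U).det := by
    have h1 : star U * U = 1 := Unitary.coe_star_mul_self _
    have := congrArg Matrix.det h1
    rw [Matrix.det_mul, Matrix.det_one] at this
    exact IsUnit.of_mul_eq_one _ this
  rw [Matrix.det_mul, Matrix.det_mul, det_diagonal]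
  refine (hUunit.mul ?_).mul hstarU
  refine isUnit_iff_ne_zero.mpr (Finset.prod_ne_zero_iff.mpr fun i _ => ?_)
  simp only [Function.comp_apply, ne_eq, Complex.ofReal_eq_zero]
  exact (Real.rpow_pos_of_pos (hA.eigenvalues_pos i) _).ne'

lemma continuous_mpow (hA : A.PosDef) : Continuous (fun p : ℝ => mpow A p) := by
  have : (fun p : ℝ => mpow A p) = fun p =>
      (hA.1.eigenvectorUnitary : Matrix n n ℂ) *
      diagonal (Complex.ofReal ∘ (fun x => x ^ p) ∘ hA.1.eigenvalues) *
      (star hA.1.eigenvectorUnitary : Matrix n n ℂ) := by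
    funext p; exact mpow_eq hA p
  rw [this]
  refine Continuous.matrix_mul (Continuous.matrix_mul continuous_const ?_) continuous_const
  refine Continuous.matrix_diagonal ?_
  refine continuous_pi fun i => ?_
  refine Complex.continuous_ofReal.comp ?_
  have : (fun p : ℝ => hA.1.eigenvalues i ^ p)
      = fun p => Real.exp (Real.log (hA.1.eigenvalues i) * p) := by
    funext p; rw [Real.rpow_def_of_pos (hA.eigenvalues_pos i)]
  show Continuous fun p : ℝ => hA.1.eigenvalues i ^ p
  rw [this]
  exact Real.continuous_exp.comp (continuous_const.mul continuous_id)



end mpow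

section kron

variable {k m : Type*} [Fintype k] [DecidableEq k] [Fintype m] [DecidableEq m]
variable {X : Matrix k k ℂ} {Y : Matrix m m ℂ}

lemma kron_mpow_mul (hX : X.PosDef) (hY : Y.PosDef) (a b c d : ℝ) :
    (mpow X a ⊗ₖ mpow Y b) * (mpow X c ⊗ₖ mpow Y d) = mpow X (a + c) ⊗ₖ mpow Y (b + d) := by
  rw [← mul_kronecker_mul, mpow_mul_mpow hX, mpow_mul_mpow hY]

lemma kron_mpow_one (hX : X.PosDef) (hY : Y.PosDef) :
    mpow X 0 ⊗ₖ mpow Y 0 = (1 : Matrix (k × m) (k × m) ℂ) := by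
  rw [mpow_zero hX, mpow_zero hY, Matrix.one_kronecker_one]

lemma kron_mpow_isHermitian (hX : X.PosDef) (hY : Y.PosDef) (a b : ℝ) :
    (mpow X a ⊗ₖ mpow Y b).IsHermitian := by
  show _ = _
  rw [kronecker_conjTranspose, (mpow_isHermitian hX a).eq, (mpow_isHermitian hY b).eq]

lemma kron_mpow_posSemidef (hX : X.PosDef) (hY : Y.PosDef) (a b : ℝ) :
    (mpow X a ⊗ₖ mpow Y b).PosSemidef :=
  kronecker_posSemidef (mpow_posSemidef hX a) (mpow_posSemidef hY b)

lemma kron_mpow_posDef (hX : X.PosDef) (hY : Y.PosDef) (a b : ℝ) :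
    (mpow X a ⊗ₖ mpow Y b).PosDef :=
  kronecker_posDef (mpow_posDef hX a) (mpow_posDef hY b)

lemma kron_mpow_inv (hX : X.PosDef) (hY : Y.PosDef) (a b : ℝ) :
    (mpow X a ⊗ₖ mpow Y b)⁻¹ = mpow X (-a) ⊗ₖ mpow Y (-b) := by
  refine Matrix.inv_eq_right_inv ?_
  rw [kron_mpow_mul hX hY, add_neg_cancel, add_neg_cancel, kron_mpow_one hX hY]

lemma blocks_psd (hX : X.PosDef) (hY : Y.PosDef) (s t : ℝ) :
    (Matrix.fromBlocks
      (mpow X s ⊗ₖ mpow Y (1-s))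
      (mpow X ((s+t)/2) ⊗ₖ mpow Y (1-(s+t)/2))
      (mpow X ((s+t)/2) ⊗ₖ mpow Y (1-(s+t)/2))
      (mpow X t ⊗ₖ mpow Y (1-t))).PosSemidef := by
  have hC : (mpow X s ⊗ₖ mpow Y (1-s)).PosDef := kron_mpow_posDef hX hY _ _
  haveI : Invertible (mpow X s ⊗ₖ mpow Y (1-s)) :=
    Matrix.invertibleOfIsUnitDet _ (isUnit_iff_ne_zero.mpr hC.det_pos.ne')
  have h3 : Matrix.fromBlocks
      (mpow X s ⊗ₖ mpow Y (1-s))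
      (mpow X ((s+t)/2) ⊗ₖ mpow Y (1-(s+t)/2))
      (mpow X ((s+t)/2) ⊗ₖ mpow Y (1-(s+t)/2))
      (mpow X t ⊗ₖ mpow Y (1-t)) = Matrix.fromBlocks
      (mpow X s ⊗ₖ mpow Y (1-s))
      (mpow X ((s+t)/2) ⊗ₖ mpow Y (1-(s+t)/2))
      ((mpow X ((s+t)/2) ⊗ₖ mpow Y (1-(s+t)/2))ᴴ)
      (mpow X t ⊗ₖ mpow Y (1-t)) := by
    rw [(kron_mpow_isHermitian hX hY _ _).eq]
  rw [h3]
  refine (Matrix.PosDef.fromBlocks₁₁ _ _ hC).mpr ?_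
  rw [(kron_mpow_isHermitian hX hY _ _).eq, kron_mpow_inv hX hY,
    kron_mpow_mul hX hY, kron_mpow_mul hX hY,
    show (s+t)/2 + -s + (s+t)/2 = t by ring,
    show (1-(s+t)/2) + -(1-s) + (1-(s+t)/2) = 1 - t by ring,
    sub_self]
  exact Matrix.PosSemidef.zero

lemma mid {A₁ A₂ Ab : Matrix k k ℂ} {B₁ B₂ Bb : Matrix m m ℂ}
    (hA₁ : A₁.PosDef) (hA₂ : A₂.PosDef) (hAb : Ab.PosDef)
    (hB₁ : B₁.PosDef) (hB₂ : B₂.PosDef) (hBb : Bb.PosDef)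
    {l : ℝ} (hl0 : 0 ≤ l) (hl1 : l ≤ 1) {s t : ℝ}
    (hs : ((mpow Ab s ⊗ₖ mpow Bb (1-s)) -
      ((1-l) • (mpow A₁ s ⊗ₖ mpow B₁ (1-s)) + l • (mpow A₂ s ⊗ₖ mpow B₂ (1-s)))).PosSemidef)
    (ht : ((mpow Ab t ⊗ₖ mpow Bb (1-t)) -
      ((1-l) • (mpow A₁ t ⊗ₖ mpow B₁ (1-t)) + l • (mpow A₂ t ⊗ₖ mpow B₂ (1-t)))).PosSemidef) :
    ((mpow Ab ((s+t)/2) ⊗ₖ mpow Bb (1-(s+t)/2)) -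
      ((1-l) • (mpow A₁ ((s+t)/2) ⊗ₖ mpow B₁ (1-(s+t)/2)) +
        l • (mpow A₂ ((s+t)/2) ⊗ₖ mpow B₂ (1-(s+t)/2)))).PosSemidef := by
  set C := mpow Ab s ⊗ₖ mpow Bb (1-s) with hCdef
  set D := mpow Ab t ⊗ₖ mpow Bb (1-t) with hDdef
  set G := mpow Ab ((s+t)/2) ⊗ₖ mpow Bb (1-(s+t)/2) with hGdef
  set E := mpow Ab (-(s/2)) ⊗ₖ mpow Bb (-((1-s)/2)) with hEdef
  set F := mpow Ab (s/2) ⊗ₖ mpow Bb ((1-s)/2) with hFdef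
  set G' := (1-l) • (mpow A₁ ((s+t)/2) ⊗ₖ mpow B₁ (1-(s+t)/2)) +
        l • (mpow A₂ ((s+t)/2) ⊗ₖ mpow B₂ (1-(s+t)/2)) with hG'def
  have hC : C.PosDef := kron_mpow_posDef hAb hBb _ _
  have hG : G.PosSemidef := kron_mpow_posSemidef hAb hBb _ _
  have hG' : G'.PosSemidef := by
    refine Matrix.PosSemidef.add ?_ ?_
    · exact smul_posSemidef (kron_mpow_posSemidef hA₁ hB₁ _ _) (by linarith)
    · exact smul_posSemidef (kron_mpow_posSemidef hA₂ hB₂ _ _) hl0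
  have hE : E.IsHermitian := kron_mpow_isHermitian hAb hBb _ _
  have hF : F.IsHermitian := kron_mpow_isHermitian hAb hBb _ _
  have hEEval : E * E = mpow Ab (-s) ⊗ₖ mpow Bb (-(1-s)) := by
    rw [hEdef, kron_mpow_mul hAb hBb, show -(s/2) + -(s/2) = -s by ring,
      show -((1-s)/2) + -((1-s)/2) = -(1-s) by ring]
  have hCinv : C⁻¹ = mpow Ab (-s) ⊗ₖ mpow Bb (-(1-s)) := by
    rw [hCdef, kron_mpow_inv hAb hBb]
  have hEE : E * E = C⁻¹ := by rw [hEEval, hCinv]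
  have hGG : G * C⁻¹ * G = D := by
    rw [hCinv, hGdef, hDdef, kron_mpow_mul hAb hBb, kron_mpow_mul hAb hBb,
      show (s+t)/2 + -s + (s+t)/2 = t by ring,
      show (1-(s+t)/2) + -(1-s) + (1-(s+t)/2) = 1 - t by ring]
  have hFE : F * E = 1 := by
    rw [hFdef, hEdef, kron_mpow_mul hAb hBb, show s/2 + -(s/2) = 0 by ring,
      show (1-s)/2 + -((1-s)/2) = 0 by ring, kron_mpow_one hAb hBb]
  have hEF : E * F = 1 := by
    rw [hFdef, hEdef, kron_mpow_mul hAb hBb, show -(s/2) + s/2 = 0 by ring,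
      show -((1-s)/2) + (1-s)/2 = 0 by ring, kron_mpow_one hAb hBb]
  have hblock : (Matrix.fromBlocks C G' G' D).PosSemidef := by
    have hsplit : Matrix.fromBlocks C G' G' D =
        ((1-l) • Matrix.fromBlocks
            (mpow A₁ s ⊗ₖ mpow B₁ (1-s))
            (mpow A₁ ((s+t)/2) ⊗ₖ mpow B₁ (1-(s+t)/2))
            (mpow A₁ ((s+t)/2) ⊗ₖ mpow B₁ (1-(s+t)/2))
            (mpow A₁ t ⊗ₖ mpow B₁ (1-t)) +
          l • Matrix.fromBlocks
            (mpow A₂ s ⊗ₖ mpow B₂ (1-s))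
            (mpow A₂ ((s+t)/2) ⊗ₖ mpow B₂ (1-(s+t)/2))
            (mpow A₂ ((s+t)/2) ⊗ₖ mpow B₂ (1-(s+t)/2))
            (mpow A₂ t ⊗ₖ mpow B₂ (1-t))) +
        Matrix.fromBlocks
          (C - ((1-l) • (mpow A₁ s ⊗ₖ mpow B₁ (1-s)) + l • (mpow A₂ s ⊗ₖ mpow B₂ (1-s)))) 0 0
          (D - ((1-l) • (mpow A₁ t ⊗ₖ mpow B₁ (1-t)) + l • (mpow A₂ t ⊗ₖ mpow B₂ (1-t)))) := by
      rw [Matrix.fromBlocks_smul, Matrix.fromBlocks_smul, Matrix.fromBlocks_add,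
        Matrix.fromBlocks_add]
      rw [Matrix.fromBlocks_inj]
      refine ⟨by abel, by rw [hG'def, add_zero], by rw [hG'def, add_zero], by abel⟩
    rw [hsplit]
    refine Matrix.PosSemidef.add (Matrix.PosSemidef.add ?_ ?_) ?_
    · exact smul_posSemidef (blocks_psd hA₁ hB₁ s t) (by linarith)
    · exact smul_posSemidef (blocks_psd hA₂ hB₂ s t) hl0
    · exact fromBlocks_diag_posSemidef hs ht
  exact step hC hG hG' hE hF hEE hGG hFE hEF hblock

end kron

section cont

variable {k m : Type*} [Fintype k] [DecidableEq k] [Fintype m] [DecidableEq m]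

lemma continuous_kron {α : Type*} [TopologicalSpace α]
    {f : α → Matrix k k ℂ} {g : α → Matrix m m ℂ}
    (hf : Continuous f) (hg : Continuous g) : Continuous fun a => f a ⊗ₖ g a := by
  apply continuous_matrix
  rintro ⟨i, j⟩ ⟨a, b⟩
  simp only [Matrix.kroneckerMap_apply]
  exact (hf.matrix_elem i a).mul (hg.matrix_elem j b)

end cont

/-- Bisection sequence starting from `[0,1]`, keeping `p` inside. -/
noncomputable def bisect (p : ℝ) : ℕ → ℝ × ℝ
  | 0 => ((0 : ℝ), (1 : ℝ))
  | n+1 =>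
    if p ≤ ((bisect p n).1 + (bisect p n).2) / 2 then
      ((bisect p n).1, ((bisect p n).1 + (bisect p n).2) / 2)
    else
      (((bisect p n).1 + (bisect p n).2) / 2, (bisect p n).2)

end LiebAux

open LiebAux Matrix

theorem lieb_joint_concavity {k m : Type*} [Fintype k] [DecidableEq k]
    [Fintype m] [DecidableEq m] (p : ℝ) (hp0 : 0 ≤ p) (hp1 : p ≤ 1)
    (A₁ A₂ : Matrix k k ℂ) (B₁ B₂ : Matrix m m ℂ)
    (hA₁ : A₁.PosDef) (hA₂ : A₂.PosDef) (hB₁ : B₁.PosDef) (hB₂ : B₂.PosDef)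
    (l : ℝ) (hl0 : 0 ≤ l) (hl1 : l ≤ 1) :
    LoewnerLE
      ((1 - l) • (mpow A₁ p ⊗ₖ mpow B₁ (1 - p)) + l • (mpow A₂ p ⊗ₖ mpow B₂ (1 - p)))
      (mpow ((1 - l) • A₁ + l • A₂) p ⊗ₖ mpow ((1 - l) • B₁ + l • B₂) (1 - p)) := by
  classical
  have hAb : ((1 - l) • A₁ + l • A₂).PosDef := convex_posDef hA₁ hA₂ hl0 hl1
  have hBb : ((1 - l) • B₁ + l • B₂).PosDef := convex_posDef hB₁ hB₂ hl0 hl1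
  set Ab := (1 - l) • A₁ + l • A₂ with hAbdef
  set Bb := (1 - l) • B₁ + l • B₂ with hBbdef
  set Δ : ℝ → Matrix (k × m) (k × m) ℂ := fun u =>
    (mpow Ab u ⊗ₖ mpow Bb (1 - u)) -
      ((1 - l) • (mpow A₁ u ⊗ₖ mpow B₁ (1 - u)) + l • (mpow A₂ u ⊗ₖ mpow B₂ (1 - u))) with hΔ
  show (Δ p).PosSemidef
  have hQ0 : (Δ 0).PosSemidef := by
    simp only [hΔ]
    rw [show (1:ℝ) - 0 = 1 by norm_num, mpow_zero hAb, mpow_one hBb,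
      mpow_zero hA₁, mpow_one hB₁, mpow_zero hA₂, mpow_one hB₂, hBbdef,
      Matrix.kronecker_add, Matrix.kronecker_smul, Matrix.kronecker_smul, sub_self]
    exact Matrix.PosSemidef.zero
  have hQ1 : (Δ 1).PosSemidef := by
    simp only [hΔ]
    rw [show (1:ℝ) - 1 = 0 by norm_num, mpow_one hAb, mpow_zero hBb,
      mpow_one hA₁, mpow_zero hB₁, mpow_one hA₂, mpow_zero hB₂, hAbdef,
      Matrix.add_kronecker, Matrix.smul_kronecker, Matrix.smul_kronecker, sub_self]
    exact Matrix.PosSemidef.zero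
  have hmid : ∀ s t : ℝ, (Δ s).PosSemidef → (Δ t).PosSemidef →
      (Δ ((s + t) / 2)).PosSemidef := by
    intro s t hs ht
    simp only [hΔ] at hs ht ⊢
    exact mid hA₁ hA₂ hAb hB₁ hB₂ hBb hl0 hl1 hs ht
  have hΔcont : Continuous Δ := by
    rw [hΔ]
    have h1 : Continuous fun u : ℝ => (1 : ℝ) - u :=
      continuous_const.sub continuous_id
    refine Continuous.sub ?_ (Continuous.add ?_ ?_)
    · exact continuous_kron (continuous_mpow hAb) ((continuous_mpow hBb).comp h1)
    · exact (continuous_kron (continuous_mpow hA₁) ((continuous_mpow hB₁).comp h1)).const_smul (1 - l)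
    · exact (continuous_kron (continuous_mpow hA₂) ((continuous_mpow hB₂).comp h1)).const_smul l
  have hclosed : IsClosed {u : ℝ | (Δ u).PosSemidef} :=
    IsClosed.preimage hΔcont isClosed_posSemidef
  have hbs : ∀ nn : ℕ, ((Δ (bisect p nn).1).PosSemidef ∧ (Δ (bisect p nn).2).PosSemidef) ∧
      ((bisect p nn).1 ≤ p ∧ p ≤ (bisect p nn).2) ∧
      (bisect p nn).2 - (bisect p nn).1 = (1/2 : ℝ)^nn := by
    intro nn
    induction nn with
    | zero =>
      refine ⟨⟨?_, ?_⟩, ⟨?_, ?_⟩, ?_⟩ <;> simp only [bisect] <;>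
        first
          | exact hQ0
          | exact hQ1
          | exact hp0
          | exact hp1
          | norm_num
    | succ nn ih =>
      obtain ⟨⟨ha, hb⟩, ⟨hap, hpb⟩, hlen⟩ := ih
      have hmidQ := hmid _ _ ha hb
      by_cases hc : p ≤ ((bisect p nn).1 + (bisect p nn).2) / 2
      · simp only [bisect, if_pos hc]
        refine ⟨⟨ha, hmidQ⟩, ⟨hap, hc⟩, ?_⟩
        rw [pow_succ]
        linarith
      · simp only [bisect, if_neg hc]
        push_neg at hc
        refine ⟨⟨hmidQ, hb⟩, ⟨hc.le, hpb⟩, ?_⟩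
        rw [pow_succ]
        linarith
  have htend : Filter.Tendsto (fun nn => (bisect p nn).1) Filter.atTop (nhds p) := by
    have hhalf : Filter.Tendsto (fun nn : ℕ => (1/2 : ℝ)^nn) Filter.atTop (nhds 0) :=
      tendsto_pow_atTop_nhds_zero_of_lt_one (by norm_num) (by norm_num)
    have h0 : Filter.Tendsto (fun nn : ℕ => p - (1/2 : ℝ)^nn) Filter.atTop (nhds p) := by
      simpa using Filter.Tendsto.const_sub p hhalf
    refine tendsto_of_tendsto_of_tendsto_of_le_of_le h0 tendsto_const_nhds ?_ ?_
    · intro nn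
      obtain ⟨_, ⟨hap, hpb⟩, hlen⟩ := hbs nn
      simp only
      linarith
    · intro nn
      exact (hbs nn).2.1.1
  exact hclosed.mem_of_tendsto htend (Filter.Eventually.of_forall fun nn => (hbs nn).1.1)
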